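/- Let C be a z_0-unsolvable configuration on the Flower snark J_3, let F = {z_1, z_{−1}}, and let X be any one of the sets A = {x_0, x_1, x_{−1}}, B = {y_0, y_1, y_{−1}}, E = {v_0, v_1, v_{−1}}. Then C(F) + 2·C(X) ≤ 10, where C(S) denotes the total number of pebbles on the vertices of S. -/

import Mathlib

/-- A pebbling move on the graph `G`: remove two pebbles from a vertex `u`
(which has at least two pebbles) and add one pebble to a neighbor `v` of `u`. -/
def PebblingMove {V : Type} [DecidableEq V] (G : SimpleGraph V) (C C' : V → ℕ) : Prop :=
  ∃ u v, G.Adj u v ∧ 2 ≤ C u ∧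
    C' = fun w => if w = u then C u - 2 else if w = v then C v + 1 else C w

/-- A configuration `C` is `r`-solvable if some (possibly empty) sequence of
pebbling moves starting from `C` produces a configuration with at least one
pebble on `r`. -/
def PebblingSolvable {V : Type} [DecidableEq V] (G : SimpleGraph V) (C : V → ℕ) (r : V) : Prop :=
  ∃ C' : V → ℕ, Relation.ReflTransGen (PebblingMove G) C C' ∧ 1 ≤ C' r

/-- The pebbling number of `G`: the least `t` such that for every target
vertex `r`, every configuration of size `t` is `r`-solvable. -/
noncomputable def pebblingNumber {V : Type} [DecidableEq V] [Fintype V] (G : SimpleGraph V) : ℕ :=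
  sInf {t : ℕ | ∀ (r : V) (C : V → ℕ), (∑ v, C v) = t → PebblingSolvable G C r}

/-- The 12 vertices of the Flower snark `J₃`; `vm` denotes `v_{-1}`,
`xm` denotes `x_{-1}`, etc. -/
inductive J3V : Type
  | v0 | v1 | vm | x0 | x1 | xm | y0 | y1 | ym | z0 | z1 | zm
  deriving DecidableEq

instance : Fintype J3V where
  elems := {J3V.v0, J3V.v1, J3V.vm, J3V.x0, J3V.x1, J3V.xm,
    J3V.y0, J3V.y1, J3V.ym, J3V.z0, J3V.z1, J3V.zm}
  complete := fun x => by cases x <;> decide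

open J3V in
/-- The Flower snark `J₃` (Tietze's graph), with its 18 edges. -/
def J3 : SimpleGraph J3V := SimpleGraph.fromEdgeSet
  ({s(z0, v0), s(z0, x0), s(z0, y0), s(v0, v1), s(v0, vm),
    s(x0, x1), s(x0, xm), s(y0, y1), s(y0, ym), s(v1, vm),
    s(v1, z1), s(vm, zm), s(x1, z1), s(y1, z1), s(xm, zm),
    s(ym, zm), s(xm, y1), s(x1, ym)} : Set (Sym2 J3V))

lemma moveMany {V : Type} [DecidableEq V] (G : SimpleGraph V) (u v : V)
    (huv : G.Adj u v) (k : ℕ) : ∀ (C : V → ℕ), 2 * k ≤ C u →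
    Relation.ReflTransGen (PebblingMove G) C
      (fun w => if w = u then C u - 2 * k else if w = v then C v + k else C w) := by
  have hne : u ≠ v := G.ne_of_adj huv
  induction k with
  | zero =>
    intro C _
    have : (fun w => if w = u then C u - 2 * 0 else if w = v then C v + 0 else C w) = C := by
      funext w
      by_cases h1 : w = u <;> by_cases h2 : w = v <;> simp [h1, h2, hne, hne.symm]
    rw [this]
  | succ k ih =>
    intro C hk
    set C1 : V → ℕ := fun w => if w = u then C u - 2 else if w = v then C v + 1 else C w with hC1
    have step : PebblingMove G C C1 := ⟨u, v, huv, by omega, rfl⟩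
    have hu1 : C1 u = C u - 2 := by simp [hC1]
    have hv1 : C1 v = C v + 1 := by simp [hC1, hne.symm]
    have htail := ih C1 (by omega)
    have heq : (fun w => if w = u then C1 u - 2 * k else if w = v then C1 v + k else C1 w)
        = (fun w => if w = u then C u - 2 * (k+1) else if w = v then C v + (k+1) else C w) := by
      funext w
      by_cases h1 : w = u <;> by_cases h2 : w = v <;> simp [hC1, h1, h2, hne, hne.symm] <;> omega
    exact Relation.ReflTransGen.head step (heq ▸ htail)

lemma spider {V : Type} [DecidableEq V] (G : SimpleGraph V)
    (r p0 p1 pm q1 qm : V)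
    (a1 : G.Adj q1 p1) (a2 : G.Adj qm pm) (a3 : G.Adj p1 p0) (a4 : G.Adj pm p0)
    (a5 : G.Adj p0 r)
    (d1 : q1 ≠ qm) (d2 : q1 ≠ pm) (d3 : q1 ≠ p0) (d4 : q1 ≠ r)
    (d5 : p1 ≠ qm) (d6 : p1 ≠ pm) (d7 : p1 ≠ r)
    (d8 : qm ≠ p0) (d9 : qm ≠ r) (d10 : pm ≠ r)
    (C : V → ℕ)
    (h : 2 ≤ C p0 + (C p1 + C q1 / 2) / 2 + (C pm + C qm / 2) / 2) :
    PebblingSolvable G C r := by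
  have e1 : q1 ≠ p1 := G.ne_of_adj a1
  have e2 : qm ≠ pm := G.ne_of_adj a2
  have e3 : p1 ≠ p0 := G.ne_of_adj a3
  have e4 : pm ≠ p0 := G.ne_of_adj a4
  have e5 : p0 ≠ r := G.ne_of_adj a5
  -- step 1: q1 → p1
  have s1 := moveMany G q1 p1 a1 (C q1 / 2) C (by omega)
  set C1 := (fun w => if w = q1 then C q1 - 2 * (C q1 / 2) else if w = p1 then C p1 + C q1 / 2 else C w) with hC1
  -- step 2: qm → pm
  have hqm : C1 qm = C qm := by simp [hC1, d1.symm, d5.symm]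
  have s2 := moveMany G qm pm a2 (C qm / 2) C1 (by omega)
  set C2 := (fun w => if w = qm then C1 qm - 2 * (C qm / 2) else if w = pm then C1 pm + C qm / 2 else C1 w) with hC2
  -- step 3: p1 → p0
  have hp1 : C2 p1 = C p1 + C q1 / 2 := by simp [hC2, hC1, d5, d6, e2.symm, e1.symm]
  have s3 := moveMany G p1 p0 a3 ((C p1 + C q1 / 2) / 2) C2 (by omega)
  set C3 := (fun w => if w = p1 then C2 p1 - 2 * ((C p1 + C q1 / 2) / 2) else if w = p0 then C2 p0 + (C p1 + C q1 / 2) / 2 else C2 w) with hC3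
  -- step 4: pm → p0
  have hpm : C3 pm = C pm + C qm / 2 := by
    simp [hC3, hC2, hC1, d6.symm, e4, e2.symm, d2.symm]
  have s4 := moveMany G pm p0 a4 ((C pm + C qm / 2) / 2) C3 (by omega)
  set C4 := (fun w => if w = pm then C3 pm - 2 * ((C pm + C qm / 2) / 2) else if w = p0 then C3 p0 + (C pm + C qm / 2) / 2 else C3 w) with hC4
  -- step 5: p0 → r
  have hp0 : C4 p0 = C p0 + (C p1 + C q1 / 2) / 2 + (C pm + C qm / 2) / 2 := by
    simp [hC4, hC3, hC2, hC1, e4.symm, e3.symm, d8.symm, d3.symm]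
  have s5 : PebblingMove G C4
      (fun w => if w = p0 then C4 p0 - 2 else if w = r then C4 r + 1 else C4 w) :=
    ⟨p0, r, a5, by omega, rfl⟩
  refine ⟨_, ((s1.trans s2).trans s3 |>.trans s4).trans (Relation.ReflTransGen.single s5), ?_⟩
  simp [e5.symm]

lemma J3adj_z1_x1 : J3.Adj J3V.z1 J3V.x1 := by
  simp [J3, SimpleGraph.fromEdgeSet_adj, Sym2.eq_iff]
lemma J3adj_zm_xm : J3.Adj J3V.zm J3V.xm := by
  simp [J3, SimpleGraph.fromEdgeSet_adj, Sym2.eq_iff]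
lemma J3adj_x1_x0 : J3.Adj J3V.x1 J3V.x0 := by
  simp [J3, SimpleGraph.fromEdgeSet_adj, Sym2.eq_iff]
lemma J3adj_xm_x0 : J3.Adj J3V.xm J3V.x0 := by
  simp [J3, SimpleGraph.fromEdgeSet_adj, Sym2.eq_iff]
lemma J3adj_x0_z0 : J3.Adj J3V.x0 J3V.z0 := by
  simp [J3, SimpleGraph.fromEdgeSet_adj, Sym2.eq_iff]
lemma J3adj_z1_y1 : J3.Adj J3V.z1 J3V.y1 := by
  simp [J3, SimpleGraph.fromEdgeSet_adj, Sym2.eq_iff]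
lemma J3adj_zm_ym : J3.Adj J3V.zm J3V.ym := by
  simp [J3, SimpleGraph.fromEdgeSet_adj, Sym2.eq_iff]
lemma J3adj_y1_y0 : J3.Adj J3V.y1 J3V.y0 := by
  simp [J3, SimpleGraph.fromEdgeSet_adj, Sym2.eq_iff]
lemma J3adj_ym_y0 : J3.Adj J3V.ym J3V.y0 := by
  simp [J3, SimpleGraph.fromEdgeSet_adj, Sym2.eq_iff]
lemma J3adj_y0_z0 : J3.Adj J3V.y0 J3V.z0 := by
  simp [J3, SimpleGraph.fromEdgeSet_adj, Sym2.eq_iff]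
lemma J3adj_z1_v1 : J3.Adj J3V.z1 J3V.v1 := by
  simp [J3, SimpleGraph.fromEdgeSet_adj, Sym2.eq_iff]
lemma J3adj_zm_vm : J3.Adj J3V.zm J3V.vm := by
  simp [J3, SimpleGraph.fromEdgeSet_adj, Sym2.eq_iff]
lemma J3adj_v1_v0 : J3.Adj J3V.v1 J3V.v0 := by
  simp [J3, SimpleGraph.fromEdgeSet_adj, Sym2.eq_iff]
lemma J3adj_vm_v0 : J3.Adj J3V.vm J3V.v0 := by
  simp [J3, SimpleGraph.fromEdgeSet_adj, Sym2.eq_iff]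
lemma J3adj_v0_z0 : J3.Adj J3V.v0 J3V.z0 := by
  simp [J3, SimpleGraph.fromEdgeSet_adj, Sym2.eq_iff]


open J3V

/-- For a `z₀`-unsolvable configuration `C` on `J₃`, with `F = {z₁, z₋₁}`
and `X` any one of `A = {x₀, x₁, x₋₁}`, `B = {y₀, y₁, y₋₁}`,
`E = {v₀, v₁, v₋₁}`, we have `C(F) + 2·C(X) ≤ 10`. -/
theorem J3_z0_unsolvable_XF (C : J3V → ℕ)
    (h : ¬ PebblingSolvable J3 C J3V.z0) :
    (∑ v ∈ ({J3V.z1, J3V.zm} : Finset J3V), C v) +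
      2 * (∑ v ∈ ({J3V.x0, J3V.x1, J3V.xm} : Finset J3V), C v) ≤ 10 ∧
    (∑ v ∈ ({J3V.z1, J3V.zm} : Finset J3V), C v) +
      2 * (∑ v ∈ ({J3V.y0, J3V.y1, J3V.ym} : Finset J3V), C v) ≤ 10 ∧
    (∑ v ∈ ({J3V.z1, J3V.zm} : Finset J3V), C v) +
      2 * (∑ v ∈ ({J3V.v0, J3V.v1, J3V.vm} : Finset J3V), C v) ≤ 10 := by
  have hx : C x0 + (C x1 + C z1 / 2) / 2 + (C xm + C zm / 2) / 2 ≤ 1 := by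
    by_contra hc
    exact h (spider J3 z0 x0 x1 xm z1 zm J3adj_z1_x1 J3adj_zm_xm J3adj_x1_x0 J3adj_xm_x0 J3adj_x0_z0
      (by simp) (by simp) (by simp) (by simp) (by simp) (by simp) (by simp)
      (by simp) (by simp) (by simp) C (by omega))
  have hy : C y0 + (C y1 + C z1 / 2) / 2 + (C ym + C zm / 2) / 2 ≤ 1 := by
    by_contra hc
    exact h (spider J3 z0 y0 y1 ym z1 zm J3adj_z1_y1 J3adj_zm_ym J3adj_y1_y0 J3adj_ym_y0 J3adj_y0_z0
      (by simp) (by simp) (by simp) (by simp) (by simp) (by simp) (by simp)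
      (by simp) (by simp) (by simp) C (by omega))
  have hv : C v0 + (C v1 + C z1 / 2) / 2 + (C vm + C zm / 2) / 2 ≤ 1 := by
    by_contra hc
    exact h (spider J3 z0 v0 v1 vm z1 zm J3adj_z1_v1 J3adj_zm_vm J3adj_v1_v0 J3adj_vm_v0 J3adj_v0_z0
      (by simp) (by simp) (by simp) (by simp) (by simp) (by simp) (by simp)
      (by simp) (by simp) (by simp) C (by omega))
  refine ⟨?_, ?_, ?_⟩ <;> simp [Finset.sum_insert, Finset.sum_pair] <;> omega
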